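/- arXiv:2209.09770 — 3 statements merged into one kernel-verified Lean document; each statement's English description precedes it below -/
import Mathlib

section
/- Let M₁ = ξ + η where ξ ∼ B(n,p) and η ∼ Poisson(λ) are independent, and let μ_k = P(M₁ = k). Then for every k ≥ 0 the recursion (np + λq − pk)·μ_k + λp·μ_{k−1} − (k+1)·q·μ_{k+1} = 0 holds, where q = 1−p and μ_{−1} := 0. -/
open scoped BigOperators

/-- The pmf of the binomial distribution `B(n,p)`. -/
noncomputable def binPMF (n : ℕ) (p : ℝ) (k : ℕ) : ℝ :=
  (n.choose k : ℝ) * p ^ k * (1 - p) ^ (n - k)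

/-- The pmf of the Poisson distribution with mean `λ`. -/
noncomputable def poisPMF (lam : ℝ) (k : ℕ) : ℝ :=
  Real.exp (-lam) * lam ^ k / (k.factorial : ℝ)

/-- The pmf of `M₁ = ξ + η`, the independent sum of `B(n,p)` and `Poisson(λ)`. -/
noncomputable def binPoisPMF (n : ℕ) (p lam : ℝ) (k : ℕ) : ℝ :=
  ∑ i ∈ Finset.range (k + 1), binPMF n p i * poisPMF lam (k - i)

lemma binPMF_rec (n : ℕ) (p : ℝ) (i : ℕ) :
    ((i : ℝ) + 1) * (1 - p) * binPMF n p (i + 1) = ((n : ℝ) - i) * p * binPMF n p i := by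
  rcases lt_or_ge i n with h | h
  · have h1 : (n.choose (i+1) : ℝ) * ((i:ℝ)+1) = (n.choose i : ℝ) * ((n:ℝ) - i) := by
      have := Nat.choose_succ_right_eq n i
      have hc := congrArg (Nat.cast : ℕ → ℝ) this
      push_cast [Nat.cast_sub h.le] at hc
      linarith
    have h2 : n - i = (n - (i+1)) + 1 := by omega
    unfold binPMF
    rw [h2, pow_succ, pow_succ]
    linear_combination (p * p ^ i * (1 - p) * (1 - p) ^ (n - (i + 1))) * h1
  · rcases eq_or_lt_of_le h with rfl | h'
    · have : n.choose (n+1) = 0 := Nat.choose_eq_zero_of_lt (by omega)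
      simp [binPMF, this]
    · have h1 : n.choose (i+1) = 0 := Nat.choose_eq_zero_of_lt (by omega)
      have h2 : n.choose i = 0 := Nat.choose_eq_zero_of_lt h'
      simp [binPMF, h1, h2]

lemma poisPMF_rec (lam : ℝ) (j : ℕ) :
    ((j : ℝ) + 1) * poisPMF lam (j + 1) = lam * poisPMF lam j := by
  unfold poisPMF
  rw [Nat.factorial_succ, pow_succ]
  have h1 : ((j+1).factorial : ℝ) ≠ 0 := by positivity
  have h2 : (j.factorial : ℝ) ≠ 0 := by positivity
  push_cast
  field_simp

/-- Panjer-type recursion for the convolution `M₁ = B(n,p) ∗ Poisson(λ)`: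
`(np + λq − pk) μ_k + λp μ_{k−1} − (k+1) q μ_{k+1} = 0`, with `μ_{−1} := 0`. -/
theorem stmt_3 (n : ℕ) (p lam : ℝ) (hp0 : 0 < p) (hp1 : p < 1) (hlam : 0 < lam) :
    ∀ k : ℕ,
      ((n : ℝ) * p + lam * (1 - p) - p * (k : ℝ)) * binPoisPMF n p lam k +
        lam * p * (if k = 0 then 0 else binPoisPMF n p lam (k - 1)) -
        ((k : ℝ) + 1) * (1 - p) * binPoisPMF n p lam (k + 1) = 0 := by
  intro k
  set b := binPMF n p with hb
  set π := poisPMF lam with hπ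
  set μ := binPoisPMF n p lam with hμ
  -- V = μ_{k-1} style sum
  have hV : (if k = 0 then 0 else μ (k - 1)) = ∑ i ∈ Finset.range k, b i * π (k - 1 - i) := by
    cases k with
    | zero => simp
    | succ j => simp [hμ, hb, hπ, binPoisPMF]
  -- main identity
  have key : ((k : ℝ) + 1) * (1 - p) * μ (k + 1)
      = ((n : ℝ) * p + lam * (1 - p) - p * (k : ℝ)) * μ k
        + lam * p * ∑ i ∈ Finset.range k, b i * π (k - 1 - i) := by
    have expand : ((k : ℝ) + 1) * (1 - p) * μ (k + 1)
        = (∑ i ∈ Finset.range (k + 2), ((i : ℝ) * (1 - p) * b i) * π (k + 1 - i))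
          + (∑ i ∈ Finset.range (k + 2), (1 - p) * (((k + 1 - i : ℕ) : ℝ)) * (b i * π (k + 1 - i))) := by
      rw [hμ, binPoisPMF, Finset.mul_sum, ← Finset.sum_add_distrib]
      apply Finset.sum_congr rfl
      intro i hi
      have hi' : i ≤ k + 1 := by
        simpa using Nat.lt_succ_iff.mp (by simpa using Finset.mem_range.mp hi)
      have hcast : ((k + 1 - i : ℕ) : ℝ) = (k : ℝ) + 1 - (i : ℝ) := by
        rw [Nat.cast_sub hi']; push_cast; ring
      rw [hcast]; ring
    have S1 : (∑ i ∈ Finset.range (k + 2), ((i : ℝ) * (1 - p) * b i) * π (k + 1 - i))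
        = ∑ i ∈ Finset.range (k + 1), (((n : ℝ) - i) * p * b i) * π (k - i) := by
      rw [Finset.sum_range_succ']
      simp only [Nat.cast_zero, zero_mul, mul_zero, zero_mul, add_zero]
      apply Finset.sum_congr rfl
      intro i hi
      have h1 : k + 1 - (i + 1) = k - i := by omega
      rw [h1]
      have := binPMF_rec n p i
      simp only [hb, hπ]
      push_cast
      linear_combination poisPMF lam (k - i) * this
    have S2 : (∑ i ∈ Finset.range (k + 2), (1 - p) * (((k + 1 - i : ℕ) : ℝ)) * (b i * π (k + 1 - i)))
        = (1 - p) * lam * μ k := by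
      rw [Finset.sum_range_succ]
      have hlast : k + 1 - (k + 1) = 0 := by omega
      rw [hlast]
      simp only [Nat.cast_zero, mul_zero, zero_mul, add_zero]
      rw [hμ, binPoisPMF, Finset.mul_sum]
      apply Finset.sum_congr rfl
      intro i hi
      have hi' : i ≤ k := Nat.lt_succ_iff.mp (Finset.mem_range.mp hi)
      have h1 : k + 1 - i = (k - i) + 1 := by omega
      rw [h1]
      have h2 : (((k - i) + 1 : ℕ) : ℝ) = ((k - i : ℕ) : ℝ) + 1 := by push_cast; ring
      rw [h2]
      have := poisPMF_rec lam (k - i)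
      simp only [hb, hπ]
      linear_combination (1 - p) * binPMF n p i * this
    -- now rewrite ((n:ℝ)-i) p b_i π(k-i) sum
    have T : (∑ i ∈ Finset.range (k + 1), (((n : ℝ) - i) * p * b i) * π (k - i))
        = (n : ℝ) * p * μ k - p * ((k : ℝ) * μ k - lam * ∑ i ∈ Finset.range k, b i * π (k - 1 - i)) := by
      have hU : (∑ i ∈ Finset.range (k + 1), ((k - i : ℕ) : ℝ) * (b i * π (k - i)))
          = lam * ∑ i ∈ Finset.range k, b i * π (k - 1 - i) := by
        rw [Finset.sum_range_succ]
        have : k - k = 0 := by omega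
        rw [this]
        simp only [Nat.cast_zero, zero_mul, add_zero]
        rw [Finset.mul_sum]
        apply Finset.sum_congr rfl
        intro i hi
        have hi' : i < k := Finset.mem_range.mp hi
        have h1 : k - i = (k - 1 - i) + 1 := by omega
        rw [h1]
        have h2 : (((k - 1 - i) + 1 : ℕ) : ℝ) = ((k - 1 - i : ℕ) : ℝ) + 1 := by push_cast; ring
        rw [h2]
        have := poisPMF_rec lam (k - 1 - i)
        simp only [hb, hπ]
        linear_combination binPMF n p i * this
      have hT2 : (∑ i ∈ Finset.range (k + 1), (i : ℝ) * (b i * π (k - i)))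
          = (k : ℝ) * μ k - ∑ i ∈ Finset.range (k + 1), ((k - i : ℕ) : ℝ) * (b i * π (k - i)) := by
        rw [hμ, binPoisPMF, Finset.mul_sum, ← Finset.sum_sub_distrib]
        apply Finset.sum_congr rfl
        intro i hi
        have hi' : i ≤ k := Nat.lt_succ_iff.mp (Finset.mem_range.mp hi)
        have hcast : ((k - i : ℕ) : ℝ) = (k : ℝ) - i := by
          push_cast [Nat.cast_sub hi']; ring
        rw [hcast]; ring
      have expand2 : (∑ i ∈ Finset.range (k + 1), (((n : ℝ) - i) * p * b i) * π (k - i))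
          = (n : ℝ) * p * μ k - p * ∑ i ∈ Finset.range (k + 1), (i : ℝ) * (b i * π (k - i)) := by
        rw [hμ, binPoisPMF, Finset.mul_sum, Finset.mul_sum, ← Finset.sum_sub_distrib]
        apply Finset.sum_congr rfl
        intro i _
        ring
      rw [expand2, hT2, hU]
    rw [expand, S1, S2, T]
    ring
  rw [hV, key]
  ring
end

section
/- Let M₁ = ξ + η where ξ ∼ B(n,p) and η ∼ Poisson(λ) are independent, q = 1−p. Then for every bounded g : ℕ → ℝ, E[ (n(p/q) + λ/q − (p/q)·M₁)·g(M₁+1) − M₁·g(M₁) + λ(p/q)·(g(M₁+2) − g(M₁+1)) ] = 0. -/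
open scoped BigOperators

/-! ### Auxiliary lemmas -/

/-- The Stein-type functional appearing in the statement. -/
noncomputable def steinF (n : ℕ) (p lam : ℝ) (g : ℕ → ℝ) (k : ℕ) : ℝ :=
  ((n : ℝ) * (p / (1 - p)) + lam / (1 - p) - (p / (1 - p)) * (k : ℝ)) * g (k + 1) -
    (k : ℝ) * g k + lam * (p / (1 - p)) * (g (k + 2) - g (k + 1))

lemma pois_nonneg {lam : ℝ} (hlam : 0 < lam) (j : ℕ) : 0 ≤ poisPMF lam j := by
  unfold poisPMF; positivity

lemma pois_summable {lam : ℝ} : Summable (poisPMF lam) := by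
  unfold poisPMF
  simpa [mul_div_assoc] using (Real.summable_pow_div_factorial lam).mul_left (Real.exp (-lam))

lemma pois_key (lam : ℝ) (j : ℕ) :
    poisPMF lam (j+1) * ((j:ℝ)+1) = lam * poisPMF lam j := by
  unfold poisPMF
  have h1 : ((j+1).factorial : ℝ) = ((j:ℝ)+1) * (j.factorial : ℝ) := by
    rw [Nat.factorial_succ]; push_cast; ring
  have h2 : (j.factorial : ℝ) ≠ 0 := Nat.cast_ne_zero.mpr (Nat.factorial_ne_zero j)
  have h3 : ((j:ℝ)+1) ≠ 0 := by positivity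
  field_simp [h1]
  rw [h1]
  ring

lemma pois_mul_summable {lam : ℝ} : Summable (fun j => poisPMF lam j * (j:ℝ)) := by
  apply (summable_nat_add_iff 1).mp
  have : (fun j : ℕ => poisPMF lam (j+1) * ((j:ℕ)+1:ℝ)) = fun j => lam * poisPMF lam j := by
    funext j; exact pois_key lam j
  simpa using this ▸ (pois_summable.mul_left lam)

lemma summable_pois_bounded {lam : ℝ} (hlam : 0 < lam) (u : ℕ → ℝ) (C : ℝ)
    (hu : ∀ j, |u j| ≤ C) : Summable (fun j => poisPMF lam j * u j) := by
  apply Summable.of_norm_bounded (g := fun j => poisPMF lam j * C) (pois_summable.mul_right C)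
  intro j
  rw [Real.norm_eq_abs, abs_mul, abs_of_nonneg (pois_nonneg hlam j)]
  exact mul_le_mul_of_nonneg_left (hu j) (pois_nonneg hlam j)

lemma summable_pois_linear {lam : ℝ} (hlam : 0 < lam) (u : ℕ → ℝ) (A B : ℝ)
    (hu : ∀ j, |u j| ≤ A + B * (j:ℝ)) : Summable (fun j => poisPMF lam j * u j) := by
  apply Summable.of_norm_bounded (g := fun j => A * poisPMF lam j + (poisPMF lam j * (j:ℝ)) * B)
    ((pois_summable.mul_left A).add (pois_mul_summable.mul_right B))
  intro j
  rw [Real.norm_eq_abs, abs_mul, abs_of_nonneg (pois_nonneg hlam j)]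
  calc poisPMF lam j * |u j| ≤ poisPMF lam j * (A + B * (j:ℝ)) :=
        mul_le_mul_of_nonneg_left (hu j) (pois_nonneg hlam j)
    _ = A * poisPMF lam j + (poisPMF lam j * (j:ℝ)) * B := by ring

lemma hasSum_pois_shift {lam : ℝ} (hlam : 0 < lam) (g : ℕ → ℝ) (C : ℝ)
    (hg : ∀ k, |g k| ≤ C) (m : ℕ) :
    HasSum (fun j => poisPMF lam j * ((j:ℝ) * g (m + j)))
      (lam * ∑' j, poisPMF lam j * g (m + 1 + j)) := by
  have hsum : Summable (fun j => poisPMF lam j * g (m + 1 + j)) :=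
    summable_pois_bounded hlam _ C (fun j => hg _)
  have h : HasSum (fun j => lam * (poisPMF lam j * g (m + 1 + j)))
      (lam * ∑' j, poisPMF lam j * g (m + 1 + j)) := hsum.hasSum.mul_left lam
  have h2 : HasSum (fun j => poisPMF lam (j+1) * (((j:ℝ)+1) * g (m + (j+1))))
      (lam * ∑' j, poisPMF lam j * g (m + 1 + j)) := by
    refine h.congr_fun fun j => ?_
    have e1 : m + 1 + j = m + (j + 1) := by omega
    rw [e1, ← mul_assoc, pois_key lam j, mul_assoc]
  have := (hasSum_nat_add_iff (f := fun j => poisPMF lam j * ((j:ℝ) * g (m + j))) 1).mp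
    (h2.congr_fun fun j => by push_cast; ring_nf)
  simpa using this

lemma tsum_antidiagonal (f : ℕ × ℕ → ℝ) (hf : Summable f) :
    ∑' k, ∑ kl ∈ Finset.HasAntidiagonal.antidiagonal k, f kl = ∑' p, f p := by
  conv_lhs => congr; ext k; rw [← Finset.sum_finset_coe, ← tsum_fintype (L := SummationFilter.unconditional _)]
  rw [← Finset.HasAntidiagonal.sigmaAntidiagonalEquivProd.tsum_eq f]
  exact (Summable.tsum_sigma' (fun n => (hasSum_fintype _).summable)
    (Finset.HasAntidiagonal.sigmaAntidiagonalEquivProd.summable_iff.mpr hf)).symm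

lemma binStein (n : ℕ) (p : ℝ) (hq : (1:ℝ) - p ≠ 0) (φ : ℕ → ℝ) :
    ∑ i ∈ Finset.range (n+1),
      binPMF n p i * (p/(1-p) * ((n:ℝ) - i) * φ (i+1) - (i:ℝ) * φ i) = 0 := by
  have key : ∀ i < n, binPMF n p i * (p/(1-p) * ((n:ℝ) - i) * φ (i+1))
      = binPMF n p (i+1) * (((i:ℝ)+1) * φ (i+1)) := by
    intro i hi
    have hch : ((n.choose (i+1) : ℝ)) * ((i:ℝ)+1) = (n.choose i : ℝ) * ((n:ℝ) - i) := by
      have := Nat.choose_succ_right_eq n i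
      have h2 : ((n.choose (i+1) * (i+1) : ℕ) : ℝ) = ((n.choose i * (n - i) : ℕ) : ℝ) :=
        congrArg (fun t : ℕ => (t:ℝ)) this
      push_cast [Nat.cast_sub hi.le] at h2
      linarith
    have hpow : (1-p) ^ (n - i) = (1-p) ^ (n - (i+1)) * (1-p) := by
      rw [← pow_succ]
      congr 1
      omega
    unfold binPMF
    rw [hpow]
    have hinv : (1-p) * (1-p)⁻¹ = 1 := mul_inv_cancel₀ hq
    linear_combination ((n.choose i : ℝ) * p^(i+1) * (1-p)^(n-(i+1)) * ((n:ℝ) - i) * φ (i+1)) * hinv + (-(p^(i+1)) * (1-p)^(n-(i+1)) * φ (i+1)) * hch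
  have hsplit : ∀ i : ℕ, binPMF n p i * (p/(1-p) * ((n:ℝ) - i) * φ (i+1) - (i:ℝ) * φ i)
      = binPMF n p i * (p/(1-p) * ((n:ℝ) - i) * φ (i+1)) - binPMF n p i * ((i:ℝ) * φ i) :=
    fun i => mul_sub _ _ _
  have hA : ∑ i ∈ Finset.range (n+1), binPMF n p i * (p/(1-p) * ((n:ℝ) - i) * φ (i+1))
      = ∑ i ∈ Finset.range (n+1), binPMF n p i * ((i:ℝ) * φ i) := by
    rw [Finset.sum_range_succ, show binPMF n p n * (p/(1-p) * ((n:ℝ) - n) * φ (n+1)) = 0 by simp,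
      add_zero, Finset.sum_range_succ' (fun i => binPMF n p i * ((i:ℝ) * φ i)) n,
      show binPMF n p 0 * (((0:ℕ):ℝ) * φ 0) = 0 by simp, add_zero]
    refine Finset.sum_congr rfl fun i hi => ?_
    rw [key i (Finset.mem_range.mp hi)]
    push_cast
    ring
  simp_rw [hsplit]
  rw [Finset.sum_sub_distrib, hA, sub_self]

lemma steinF_bound (n : ℕ) (p lam : ℝ) (hp0 : 0 < p) (hp1 : p < 1) (hlam : 0 < lam)
    (g : ℕ → ℝ) (C : ℝ) (hg : ∀ k, |g k| ≤ C) (k : ℕ) :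
    |steinF n p lam g k| ≤
      (|(n:ℝ) * (p/(1-p)) + lam/(1-p)| + 2*lam*(p/(1-p)))*C + ((p/(1-p))+1)*C * (k:ℝ) := by
  have hq : (0:ℝ) < 1 - p := by linarith
  have hr : 0 ≤ p/(1-p) := by positivity
  have hC : 0 ≤ C := (abs_nonneg _).trans (hg 0)
  set c : ℝ := (n:ℝ) * (p/(1-p)) + lam/(1-p) with hc
  have h1 : |(c - (p/(1-p)) * (k:ℝ)) * g (k+1)| ≤ (|c| + (p/(1-p)) * (k:ℝ)) * C := by
    rw [abs_mul]
    apply mul_le_mul _ (hg _) (abs_nonneg _) (by positivity)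
    calc |c - (p/(1-p)) * (k:ℝ)| ≤ |c| + |(p/(1-p)) * (k:ℝ)| := abs_sub _ _
      _ = |c| + (p/(1-p)) * (k:ℝ) := by
        rw [abs_of_nonneg (show (0:ℝ) ≤ (p/(1-p)) * (k:ℝ) by positivity)]
  have h2 : |(k:ℝ) * g k| ≤ (k:ℝ) * C := by
    rw [abs_mul, Nat.abs_cast]
    exact mul_le_mul_of_nonneg_left (hg _) (Nat.cast_nonneg _)
  have h3 : |lam * (p/(1-p)) * (g (k+2) - g (k+1))| ≤ lam * (p/(1-p)) * (2*C) := by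
    rw [abs_mul, abs_of_nonneg (by positivity : (0:ℝ) ≤ lam * (p/(1-p)))]
    apply mul_le_mul_of_nonneg_left _ (by positivity)
    calc |g (k+2) - g (k+1)| ≤ |g (k+2)| + |g (k+1)| := abs_sub _ _
      _ ≤ 2*C := by have := hg (k+2); have := hg (k+1); linarith
  calc |steinF n p lam g k|
      ≤ |(c - (p/(1-p)) * (k:ℝ)) * g (k+1) - (k:ℝ) * g k|
        + |lam * (p/(1-p)) * (g (k+2) - g (k+1))| := abs_add_le _ _
    _ ≤ |(c - (p/(1-p)) * (k:ℝ)) * g (k+1)| + |(k:ℝ) * g k|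
        + |lam * (p/(1-p)) * (g (k+2) - g (k+1))| := by
          have := abs_sub ((c - (p/(1-p)) * (k:ℝ)) * g (k+1)) ((k:ℝ) * g k)
          linarith
    _ ≤ (|c| + (p/(1-p)) * (k:ℝ)) * C + (k:ℝ) * C + lam * (p/(1-p)) * (2*C) := by linarith
    _ = (|c| + 2*lam*(p/(1-p)))*C + ((p/(1-p))+1)*C * (k:ℝ) := by ring

lemma summable_pois_steinF (n : ℕ) (p lam : ℝ) (hp0 : 0 < p) (hp1 : p < 1) (hlam : 0 < lam)
    (g : ℕ → ℝ) (C : ℝ) (hg : ∀ k, |g k| ≤ C) (i : ℕ) :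
    Summable (fun j => poisPMF lam j * steinF n p lam g (i + j)) := by
  set A : ℝ := (|(n:ℝ) * (p/(1-p)) + lam/(1-p)| + 2*lam*(p/(1-p)))*C with hA
  set B : ℝ := ((p/(1-p))+1)*C with hB
  apply summable_pois_linear hlam _ (A + B * (i:ℝ)) B
  intro j
  calc |steinF n p lam g (i + j)| ≤ A + B * ((i+j : ℕ):ℝ) :=
        steinF_bound n p lam hp0 hp1 hlam g C hg (i+j)
    _ = (A + B * (i:ℝ)) + B * (j:ℝ) := by push_cast; ring

lemma inner_pois (n : ℕ) (p lam : ℝ) (hp0 : 0 < p) (hp1 : p < 1) (hlam : 0 < lam)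
    (g : ℕ → ℝ) (C : ℝ) (hg : ∀ k, |g k| ≤ C) (i : ℕ) :
    ∑' j, poisPMF lam j * steinF n p lam g (i + j) =
      p/(1-p) * ((n:ℝ) - i) * (∑' j, poisPMF lam j * g (i + 1 + j)) -
        (i:ℝ) * ∑' j, poisPMF lam j * g (i + j) := by
  have hq : (0:ℝ) < 1 - p := by linarith
  have hq' : (1:ℝ) - p ≠ 0 := ne_of_gt hq
  set G : ℕ → ℝ := fun m => ∑' j, poisPMF lam j * g (m + j) with hG
  have h0 : HasSum (fun j => poisPMF lam j * g (i + j)) (G i) :=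
    (summable_pois_bounded hlam _ C (fun j => hg _)).hasSum
  have h1 : HasSum (fun j => poisPMF lam j * g (i + 1 + j)) (G (i+1)) :=
    (summable_pois_bounded hlam _ C (fun j => hg _)).hasSum
  have h2 : HasSum (fun j => poisPMF lam j * g (i + 2 + j)) (G (i+2)) :=
    (summable_pois_bounded hlam _ C (fun j => hg _)).hasSum
  have hs0 : HasSum (fun j => poisPMF lam j * ((j:ℝ) * g (i + j))) (lam * G (i+1)) :=
    hasSum_pois_shift hlam g C hg i
  have hs1 : HasSum (fun j => poisPMF lam j * ((j:ℝ) * g (i + 1 + j))) (lam * G (i+2)) := by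
    have h := hasSum_pois_shift hlam g C hg (i+1)
    have e : i + 1 + 1 = i + 2 := by omega
    rw [e] at h
    exact h
  set c : ℝ := (n:ℝ) * (p/(1-p)) + lam/(1-p) with hc
  have H : HasSum (fun j => poisPMF lam j * steinF n p lam g (i + j))
      (((((c - (p/(1-p))*(i:ℝ)) * G (i+1) - (p/(1-p)) * (lam * G (i+2)))
        - (i:ℝ) * G i) - lam * G (i+1))
        + ((lam * (p/(1-p))) * G (i+2) - (lam * (p/(1-p))) * G (i+1))) := by
    refine (((((h1.mul_left (c - (p/(1-p))*(i:ℝ))).sub (hs1.mul_left (p/(1-p)))).sub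
      (h0.mul_left (i:ℝ))).sub hs0).add
      ((h2.mul_left (lam * (p/(1-p)))).sub (h1.mul_left (lam * (p/(1-p)))))).congr_fun
      fun j => ?_
    have e1 : i + 1 + j = i + j + 1 := by omega
    have e2 : i + 2 + j = i + j + 2 := by omega
    rw [e1, e2]
    unfold steinF
    push_cast
    ring
  rw [H.tsum_eq]
  have hlin : c - (p/(1-p))*(i:ℝ) - lam - lam * (p/(1-p)) = p/(1-p) * ((n:ℝ) - i) := by
    rw [hc]
    field_simp
    ring
  have : G (i+1) = ∑' j, poisPMF lam j * g (i + 1 + j) := rfl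
  rw [← this]
  linear_combination (G (i+1)) * hlin

/-- Perturbed Stein identity for `M₁ = B(n,p) ∗ Poisson(λ)`: for every bounded `g`,
`E[(n(p/q) + λ/q − (p/q) M₁) g(M₁+1) − M₁ g(M₁) + λ(p/q)(g(M₁+2) − g(M₁+1))] = 0`. -/
theorem stmt_4 (n : ℕ) (p lam : ℝ) (hp0 : 0 < p) (hp1 : p < 1) (hlam : 0 < lam)
    (g : ℕ → ℝ) (C : ℝ) (hg : ∀ k, |g k| ≤ C) :
    ∑' k : ℕ,
      binPoisPMF n p lam k *
        (((n : ℝ) * (p / (1 - p)) + lam / (1 - p) - (p / (1 - p)) * (k : ℝ)) * g (k + 1) -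
          (k : ℝ) * g k + lam * (p / (1 - p)) * (g (k + 2) - g (k + 1))) = 0 := by
  have hq : (0:ℝ) < 1 - p := by linarith
  have hq' : (1:ℝ) - p ≠ 0 := ne_of_gt hq
  have hC : 0 ≤ C := (abs_nonneg _).trans (hg 0)
  set A : ℝ := (|(n:ℝ) * (p/(1-p)) + lam/(1-p)| + 2*lam*(p/(1-p)))*C with hA
  set B : ℝ := ((p/(1-p))+1)*C with hB
  set f : ℕ × ℕ → ℝ :=
    fun q => binPMF n p q.1 * (poisPMF lam q.2 * steinF n p lam g (q.1 + q.2)) with hf_def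
  -- summability of f on ℕ × ℕ
  have hb0 : ∀ i, n < i → binPMF n p i = 0 := by
    intro i hi
    unfold binPMF
    rw [Nat.choose_eq_zero_of_lt hi]
    simp
  have habs : Summable (fun q : ℕ × ℕ => |f q|) := by
    rw [summable_prod_of_nonneg (fun q => abs_nonneg (f q))]
    constructor
    · intro i
      have : Summable (fun j => poisPMF lam j * steinF n p lam g (i + j)) :=
        summable_pois_steinF n p lam hp0 hp1 hlam g C hg i
      simpa [hf_def, abs_mul] using ((this.abs).mul_left |binPMF n p i|)
    · apply summable_of_ne_finset_zero (s := Finset.range (n+1))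
      intro i hi
      have hb : binPMF n p i = 0 := hb0 i (by simpa using hi)
      simp [hf_def, hb]
  have hf : Summable f := summable_abs_iff.mp habs
  -- rewrite the sum via the antidiagonal
  have step1 : ∀ k : ℕ,
      binPoisPMF n p lam k * steinF n p lam g k = ∑ kl ∈ Finset.HasAntidiagonal.antidiagonal k, f kl := by
    intro k
    rw [Finset.Nat.sum_antidiagonal_eq_sum_range_succ
      (fun a b => binPMF n p a * (poisPMF lam b * steinF n p lam g (a + b)))]
    unfold binPoisPMF
    rw [Finset.sum_mul]
    refine Finset.sum_congr rfl fun i hi => ?_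
    have : i + (k - i) = k := Nat.add_sub_cancel' (Nat.lt_succ_iff.mp (Finset.mem_range.mp hi))
    rw [this, mul_assoc]
  have goal' : ∑' k, binPoisPMF n p lam k * steinF n p lam g k = 0 := by
    rw [tsum_congr step1, tsum_antidiagonal f hf,
      Summable.tsum_prod' hf (fun i => hf.prod_factor i),
      tsum_eq_sum (s := Finset.range (n+1))
        (fun i hi => by
          have hb : binPMF n p i = 0 := hb0 i (by simpa using hi)
          simp [hf_def, hb])]
    have step2 : ∀ i ∈ Finset.range (n+1),
        ∑' j, f (i, j) = binPMF n p i *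
          (p/(1-p) * ((n:ℝ) - i) * ((fun m => ∑' j, poisPMF lam j * g (m + j)) (i+1)) -
            (i:ℝ) * ((fun m => ∑' j, poisPMF lam j * g (m + j)) i)) := by
      intro i _
      rw [show (fun j => f (i, j)) = fun j =>
        binPMF n p i * (poisPMF lam j * steinF n p lam g (i + j)) from rfl, tsum_mul_left,
        inner_pois n p lam hp0 hp1 hlam g C hg i]
    rw [Finset.sum_congr rfl step2]
    exact binStein n p hq' (fun m => ∑' j, poisPMF lam j * g (m + j))
  exact goal'
end

section
/- For cyclic k-runs with i.i.d. Bernoulli(p) trials, the second factorial cumulant is Γ₂(W) = (N p^k/(1−p)) · [2(p − p^k) − (2k−1) p^k (1−p)]. In particular Γ₂(W) > 0 (i.e. Var W > E W) if and only if 2(p − p^k) > (2k−1) p^k (1−p). -/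
open scoped BigOperators
open MeasureTheory

set_option linter.unusedSectionVars false
set_option maxHeartbeats 1000000

namespace Stmt17Aux
open Finset

variable {N k : ℕ} [NeZero N]

/-- The window of length `k` starting at `j` in `ZMod N`. -/
def Sset (N k : ℕ) [NeZero N] (j : ZMod N) : Finset (ZMod N) :=
  (Finset.range k).image (fun l : ℕ => j + (l : ZMod N))

lemma cast_injOn (hkN : k ≤ N) : Set.InjOn (fun l : ℕ => (l : ZMod N)) (Finset.range k) := by
  intro a ha b hb hab
  simp only [Finset.coe_range, Set.mem_Iio] at ha hb
  have := congrArg ZMod.val hab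
  rwa [ZMod.val_cast_of_lt (lt_of_lt_of_le ha hkN),
    ZMod.val_cast_of_lt (lt_of_lt_of_le hb hkN)] at this

lemma card_Sset (hkN : k ≤ N) (j : ZMod N) : (Sset N k j).card = k := by
  rw [Sset, Finset.card_image_of_injOn, Finset.card_range]
  intro a ha b hb hab
  exact cast_injOn hkN ha hb (by simpa using add_left_cancel hab)

lemma prod_Sset (hkN : k ≤ N) (j : ZMod N) (I : ZMod N → ℝ) :
    ∏ a ∈ Sset N k j, I a = ∏ l ∈ Finset.range k, I (j + (l : ZMod N)) := by
  rw [Sset, Finset.prod_image]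
  intro a ha b hb hab
  exact cast_injOn hkN ha hb (by simpa using add_left_cancel hab)

lemma Sset_translate (i j : ZMod N) : Sset N k (i + j) = (Sset N k j).image (fun a => i + a) := by
  simp only [Sset, Finset.image_image]
  congr 1
  ext l
  simp [add_assoc]

lemma card_inter_translate (i d : ZMod N) :
    (Sset N k i ∩ Sset N k (i + d)).card = (Sset N k 0 ∩ Sset N k d).card := by
  have h0 : Sset N k i = (Sset N k 0).image (fun a => i + a) := by
    simpa using Sset_translate i (0 : ZMod N)
  rw [h0, Sset_translate, ← Finset.image_inter _ _ (add_right_injective i),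
    Finset.card_image_of_injective _ (add_right_injective i)]

lemma card_inter_neg (d : ZMod N) :
    (Sset N k 0 ∩ Sset N k d).card = (Sset N k 0 ∩ Sset N k (-d)).card := by
  have h := card_inter_translate (N := N) (k := k) d (-d)
  rw [add_neg_cancel] at h
  rw [← h, Finset.inter_comm]

lemma mem_Sset {j a : ZMod N} : a ∈ Sset N k j ↔ ∃ l < k, j + (l : ZMod N) = a := by
  simp [Sset]

lemma cast_eq_add_iff {d : ZMod N} {l m : ℕ} (hl : l < N) (hm : d.val + m < N) :
    (l : ZMod N) = d + (m : ZMod N) ↔ l = d.val + m := by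
  constructor
  · intro h
    have hd : d = ((d.val : ℕ) : ZMod N) := by simp [ZMod.natCast_val, ZMod.cast_id]
    rw [hd, ← Nat.cast_add] at h
    have := congrArg ZMod.val h
    rwa [ZMod.val_cast_of_lt hl, ZMod.val_cast_of_lt hm] at this
  · rintro rfl
    push_cast
    simp [ZMod.natCast_val, ZMod.cast_id]

lemma inter_eq_of_lt (hN : 2 * k ≤ N) {d : ZMod N} (hd : d.val < k) :
    Sset N k 0 ∩ Sset N k d = (Finset.Ico d.val k).image (fun l : ℕ => (l : ZMod N)) := by
  ext a
  simp only [Finset.mem_inter, mem_Sset, Finset.mem_image, Finset.mem_Ico, zero_add]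
  constructor
  · rintro ⟨⟨l, hl, rfl⟩, ⟨m, hm, hdm⟩⟩
    have h1 : (l : ZMod N) = d + (m : ZMod N) := hdm.symm
    have h2 : l = d.val + m := by
      rw [cast_eq_add_iff (by omega) (by omega)] at h1; exact h1
    exact ⟨l, ⟨by omega, hl⟩, rfl⟩
  · rintro ⟨l, ⟨hdl, hl⟩, rfl⟩
    refine ⟨⟨l, hl, rfl⟩, ⟨l - d.val, by omega, ?_⟩⟩
    rw [eq_comm, cast_eq_add_iff (by omega) (by omega)]
    omega

lemma inter_eq_empty (hN : 2 * k ≤ N) {d : ZMod N} (hd1 : ¬ d.val < k) (hd2 : ¬ N - d.val < k) :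
    Sset N k 0 ∩ Sset N k d = ∅ := by
  have hv : d.val < N := ZMod.val_lt d
  ext a
  simp only [Finset.mem_inter, mem_Sset, Finset.notMem_empty, iff_false, zero_add, not_and]
  rintro ⟨l, hl, rfl⟩ ⟨m, hm, hdm⟩
  have h1 : (l : ZMod N) = d + (m : ZMod N) := hdm.symm
  rw [cast_eq_add_iff (by omega) (by omega)] at h1
  omega

lemma card_inter_of_lt (hN : 2 * k ≤ N) {d : ZMod N} (hd : d.val < k) :
    (Sset N k 0 ∩ Sset N k d).card = k - d.val := by
  rw [inter_eq_of_lt hN hd, Finset.card_image_of_injOn, Nat.card_Ico]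
  intro a ha b hb hab
  simp only [Finset.coe_Ico, Set.mem_Ico] at ha hb
  have := congrArg ZMod.val hab
  rwa [ZMod.val_cast_of_lt (by omega), ZMod.val_cast_of_lt (by omega)] at this

lemma card_inter (hk : 1 ≤ k) (hN : 2 * k ≤ N) (d : ZMod N) :
    (Sset N k 0 ∩ Sset N k d).card =
      if d.val < k then k - d.val else if N - d.val < k then k - (N - d.val) else 0 := by
  by_cases h1 : d.val < k
  · rw [if_pos h1, card_inter_of_lt hN h1]
  · rw [if_neg h1]
    by_cases h2 : N - d.val < k
    · have hd0 : d ≠ 0 := by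
        intro h; rw [h] at h1; simp [ZMod.val_zero] at h1; omega
      have hneg : (-d).val = N - d.val := by
        rw [ZMod.neg_val, if_neg hd0]
      rw [if_pos h2, card_inter_neg, card_inter_of_lt hN (by rw [hneg]; exact h2), hneg]
    · rw [if_neg h2, inter_eq_empty hN h1 h2, Finset.card_empty]

lemma integral_prod_indicator (μ : Measure Bool) [IsProbabilityMeasure μ]
    (S : Finset (ZMod N)) :
    ∫ ω : ZMod N → Bool, (∏ a ∈ S, (if ω a = true then (1:ℝ) else 0)) ∂(Measure.pi fun _ => μ)
      = (∫ b, (if b = true then (1:ℝ) else 0) ∂μ) ^ S.card := by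
  letI : MeasureSpace Bool := ⟨μ⟩
  classical
  have hrw : ∀ ω : ZMod N → Bool, (∏ a ∈ S, (if ω a = true then (1:ℝ) else 0))
      = ∏ a : ZMod N, (if a ∈ S then (if ω a = true then (1:ℝ) else 0) else 1) := by
    intro ω
    rw [Finset.prod_ite_mem Finset.univ S, Finset.univ_inter]
  simp_rw [hrw]
  have h2 := MeasureTheory.integral_fintype_prod_eq_prod (ι := ZMod N)
    (fun a (b : Bool) => if a ∈ S then (if b = true then (1:ℝ) else 0) else 1)
    (μ := fun _ => (volume : Measure Bool))
  rw [show (Measure.pi fun _ => (volume : Measure Bool)) = Measure.pi fun _ => μ from rfl] at h2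
  rw [h2]
  have h3 : ∀ a : ZMod N, (∫ x : Bool, (if a ∈ S then (if x = true then (1:ℝ) else 0) else 1))
      = if a ∈ S then (∫ b, (if b = true then (1:ℝ) else 0) ∂μ) else 1 := by
    intro a
    by_cases ha : a ∈ S
    · simp only [ha, if_true]; rfl
    · simp only [ha, if_false]
      rw [integral_const]
      rw [show (volume : Measure Bool) = μ from rfl, probReal_univ, one_smul]
  simp_rw [h3]
  rw [Finset.prod_ite_mem Finset.univ S, Finset.univ_inter, Finset.prod_const]

lemma prod_union_indicator {α : Type*} [DecidableEq α] (s t : Finset α) (I : α → ℝ)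
    (h : ∀ a, I a = 0 ∨ I a = 1) :
    (∏ a ∈ s, I a) * (∏ a ∈ t, I a) = ∏ a ∈ s ∪ t, I a := by
  rw [← Finset.prod_union_inter]
  by_cases h0 : ∏ a ∈ s ∩ t, I a = 0
  · obtain ⟨a, ha, ha0⟩ := Finset.prod_eq_zero_iff.mp h0
    rw [h0, mul_zero, eq_comm]
    exact Finset.prod_eq_zero (Finset.mem_union.mpr (Or.inl (Finset.mem_inter.mp ha).1)) ha0
  · have h1 : ∏ a ∈ s ∩ t, I a = 1 := by
      apply Finset.prod_eq_one
      intro a ha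
      rcases h a with h' | h'
      · exact absurd (Finset.prod_eq_zero ha h') h0
      · exact h'
    rw [h1, mul_one]

end Stmt17Aux

open Stmt17Aux

/-- Second factorial cumulant of the number of cyclic `k`-runs: with `ξ_i` i.i.d.
Bernoulli(`p`), `X_j = ξ_j ⋯ ξ_{j+k−1}` (indices mod `N`) and `W = Σ_j X_j`,
`Γ₂(W) = Var W − E W = (N p^k/(1−p)) [2(p − p^k) − (2k−1) p^k (1−p)]`; in particular
`Var W > E W` if and only if `2(p − p^k) > (2k−1) p^k (1−p)`. -/
theorem stmt_17 (N k : ℕ) [NeZero N] (hk : 1 ≤ k) (hN : 2 * k ≤ N)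
    (p : ℝ) (hp0 : 0 < p) (hp1 : p < 1) (hp' : ENNReal.ofReal p ≤ 1) :
    let P : Measure (ZMod N → Bool) :=
      Measure.pi fun _ => (PMF.bernoulli (Real.toNNReal p) (ENNReal.coe_le_one_iff.mp hp')).toMeasure
    let X : ZMod N → (ZMod N → Bool) → ℝ := fun j ω =>
      ∏ l ∈ Finset.range k, (if ω (j + (l : ZMod N)) = true then (1 : ℝ) else 0)
    let W : (ZMod N → Bool) → ℝ := fun ω => ∑ j : ZMod N, X j ω
    let EW := ∫ ω, W ω ∂P
    let varW := (∫ ω, (W ω) ^ 2 ∂P) - EW ^ 2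
    varW - EW = (N * p ^ k / (1 - p)) * (2 * (p - p ^ k) - (2 * k - 1) * p ^ k * (1 - p)) ∧
    (EW < varW ↔ (2 * k - 1) * p ^ k * (1 - p) < 2 * (p - p ^ k)) := by
  intro P X W EW varW
  classical
  have hkN : k ≤ N := by omega
  set μ : Measure Bool := (PMF.bernoulli (Real.toNNReal p) (ENNReal.coe_le_one_iff.mp hp')).toMeasure with hμ
  have hq : (∫ b, (if b = true then (1:ℝ) else 0) ∂μ) = p := by
    rw [hμ]
    simp [PMF.integral_eq_sum, PMF.bernoulli_apply, ENNReal.toReal_ofReal hp0.le, Real.coe_toNNReal _ hp0.le]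
  -- X as a product over the window set
  have hXS : ∀ (j : ZMod N) (ω : ZMod N → Bool),
      X j ω = ∏ a ∈ Sset N k j, (if ω a = true then (1:ℝ) else 0) :=
    fun j ω => (prod_Sset hkN j (fun a => if ω a = true then (1:ℝ) else 0)).symm
  have hI01 : ∀ (ω : ZMod N → Bool) (a : ZMod N),
      (if ω a = true then (1:ℝ) else 0) = 0 ∨ (if ω a = true then (1:ℝ) else 0) = 1 := by
    intro ω a; by_cases h : ω a = true <;> simp [h]
  -- expectation of X j
  have hEX : ∀ j : ZMod N, ∫ ω, X j ω ∂P = p ^ k := by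
    intro j
    simp_rw [hXS j]
    rw [integral_prod_indicator μ, card_Sset hkN, hq]
  -- expectation of W
  have hcard : (Finset.univ : Finset (ZMod N)).card = N := by
    simpa using ZMod.card N
  have hEW : EW = (N : ℝ) * p ^ k := by
    show (∫ ω, (∑ j : ZMod N, X j ω) ∂P) = _
    rw [integral_finset_sum _ (fun j _ => Integrable.of_finite)]
    simp_rw [hEX]
    rw [Finset.sum_const, hcard, nsmul_eq_mul]
  -- expectation of X i * X j
  have hEXX : ∀ i j : ZMod N, ∫ ω, X i ω * X j ω ∂P
      = p ^ (2 * k - (Sset N k 0 ∩ Sset N k (j - i)).card) := by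
    intro i j
    have hprod : ∀ ω, X i ω * X j ω
        = ∏ a ∈ Sset N k i ∪ Sset N k j, (if ω a = true then (1:ℝ) else 0) := by
      intro ω
      rw [hXS i, hXS j]
      exact prod_union_indicator _ _ _ (hI01 ω)
    simp_rw [hprod]
    rw [integral_prod_indicator μ, hq]
    congr 1
    have hct := card_inter_translate (k := k) i (j - i)
    rw [add_sub_cancel] at hct
    have := Finset.card_union_add_card_inter (Sset N k i) (Sset N k j)
    rw [card_Sset hkN, card_Sset hkN] at this
    omega
  -- the inner sum as a function of the difference
  have hinner : ∀ i : ZMod N, ∑ j : ZMod N, ∫ ω, X i ω * X j ω ∂P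
      = ∑ d : ZMod N, p ^ (2 * k - (Sset N k 0 ∩ Sset N k d).card) := by
    intro i
    simp_rw [hEXX i]
    exact Fintype.sum_equiv (Equiv.subRight i) _ _ (fun j => rfl)
  -- second moment
  have hW2 : (∫ ω, (W ω) ^ 2 ∂P)
      = (N : ℝ) * ∑ d : ZMod N, p ^ (2 * k - (Sset N k 0 ∩ Sset N k d).card) := by
    have hWsq : ∀ ω, (W ω) ^ 2 = ∑ i : ZMod N, ∑ j : ZMod N, X i ω * X j ω := by
      intro ω
      show (∑ j : ZMod N, X j ω) ^ 2 = _
      rw [sq, Finset.sum_mul_sum]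
    simp_rw [hWsq]
    rw [integral_finset_sum _ (fun i _ => Integrable.of_finite)]
    have : ∀ i : ZMod N, ∫ ω, (∑ j : ZMod N, X i ω * X j ω) ∂P
        = ∑ j : ZMod N, ∫ ω, X i ω * X j ω ∂P :=
      fun i => integral_finset_sum _ (fun j _ => Integrable.of_finite)
    simp_rw [this, hinner]
    rw [Finset.sum_const, hcard, nsmul_eq_mul]
  -- convert the sum over `ZMod N` to a sum over `range N`
  have hTval : ∑ d : ZMod N, p ^ (2 * k - (Sset N k 0 ∩ Sset N k d).card)
      = ∑ i ∈ Finset.range N, p ^ (2 * k - (if i < k then k - i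
          else if N - i < k then k - (N - i) else 0)) := by
    rw [Finset.sum_nbij' (i := fun d : ZMod N => d.val) (j := fun i : ℕ => (i : ZMod N))]
    · intro d _
      simp [ZMod.val_lt d]
    · intro i _
      exact Finset.mem_univ _
    · intro d _
      simp [ZMod.natCast_val, ZMod.cast_id]
    · intro i hi
      exact ZMod.val_cast_of_lt (Finset.mem_range.mp hi)
    · intro d _
      rw [card_inter hk hN d]
  -- split the range sum into three pieces
  have hsplit : ∑ i ∈ Finset.range N, p ^ (2 * k - (if i < k then k - i
          else if N - i < k then k - (N - i) else 0))
      = (∑ i ∈ Finset.range k, p ^ (k + i)) + ((N + 1 - 2 * k : ℕ) : ℝ) * p ^ (2 * k)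
        + ∑ e ∈ Finset.Ico 1 k, p ^ (k + e) := by
    rw [Finset.range_eq_Ico,
      ← Finset.sum_Ico_consecutive _ (Nat.zero_le k) hkN,
      ← Finset.sum_Ico_consecutive _ (show k ≤ N - k + 1 by omega) (show N - k + 1 ≤ N by omega),
      ← add_assoc]
    congr 1
    · congr 1
      · rw [← Finset.range_eq_Ico]
        apply Finset.sum_congr rfl
        intro i hi
        rw [Finset.mem_range] at hi
        rw [if_pos hi]
        congr 1
        omega
      · rw [Finset.sum_congr rfl (g := fun _ => p ^ (2 * k))
          (fun i hi => by
            rw [Finset.mem_Ico] at hi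
            rw [if_neg (by omega), if_neg (by omega)]
            norm_num),
          Finset.sum_const, Nat.card_Ico, nsmul_eq_mul]
        congr 2
        omega
    · rw [Finset.sum_nbij' (i := fun i : ℕ => N - i) (j := fun e : ℕ => N - e)]
      · intro i hi
        rw [Finset.mem_Ico] at hi ⊢
        omega
      · intro e he
        rw [Finset.mem_Ico] at he ⊢
        omega
      · intro i hi
        rw [Finset.mem_Ico] at hi
        omega
      · intro e he
        rw [Finset.mem_Ico] at he
        omega
      · intro i hi
        rw [Finset.mem_Ico] at hi
        rw [if_neg (by omega), if_pos (by omega)]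
        congr 1
        omega
  -- geometric sums
  have hp1' : p - 1 ≠ 0 := by linarith
  have hs1 : ∑ i ∈ Finset.range k, p ^ (k + i) = p ^ k * ((p ^ k - 1) / (p - 1)) := by
    simp_rw [pow_add]
    rw [← Finset.mul_sum, geom_sum_eq hp1.ne k]
  have hs2 : ∑ e ∈ Finset.Ico 1 k, p ^ (k + e) = p ^ k * ((p ^ k - p) / (p - 1)) := by
    simp_rw [pow_add]
    rw [← Finset.mul_sum, geom_sum_Ico hp1.ne hk, pow_one]
  have hc : ((N + 1 - 2 * k : ℕ) : ℝ) = (N : ℝ) + 1 - 2 * k := by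
    rw [Nat.cast_sub (by omega)]
    push_cast
    ring
  have hΓ : varW - EW
      = (N * p ^ k / (1 - p)) * (2 * (p - p ^ k) - (2 * k - 1) * p ^ k * (1 - p)) := by
    show (∫ ω, (W ω) ^ 2 ∂P) - EW ^ 2 - EW = _
    rw [hW2, hTval, hsplit, hs1, hs2, hc, hEW]
    have hp1'' : (1 : ℝ) - p ≠ 0 := by linarith
    field_simp
    ring
  refine ⟨hΓ, ?_⟩
  have hN0 : 0 < (N : ℝ) := by
    exact_mod_cast Nat.pos_of_ne_zero (NeZero.ne N)
  have hC : 0 < (N : ℝ) * p ^ k / (1 - p) :=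
    div_pos (mul_pos hN0 (pow_pos hp0 k)) (by linarith)
  have key : 0 < varW - EW ↔ 0 < 2 * (p - p ^ k) - (2 * (k:ℝ) - 1) * p ^ k * (1 - p) := by
    rw [hΓ]
    exact mul_pos_iff_of_pos_left hC
  rw [← sub_pos, key]
  constructor <;> intro h <;> linarith
end
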